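/- arXiv:1102.1169 — 3 statements merged into one kernel-verified Lean document; each statement's English description precedes it below -/
import Mathlib

section
/- Let G be a finite simple graph and r₁, …, r_k nonnegative integers with ∑ᵢ rᵢ ≥ Δ(G) + 1 − k. Then V(G) can be partitioned into sets V₁, …, V_k such that the induced subgraph G[Vᵢ] has maximum degree at most rᵢ for each i (Lovász's decomposition lemma). -/
open SimpleGraph Finset

private lemma card_filter_split {α : Type*} [Fintype α] [DecidableEq α] (v : α)
    (P : α → Prop) [DecidablePred P] :
    (Finset.univ.filter P).card
      = ((Finset.univ.erase v).filter P).card + (if P v then 1 else 0) := by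
  conv_lhs => rw [← Finset.insert_erase (Finset.mem_univ v)]
  rw [Finset.filter_insert]
  split
  · rw [Finset.card_insert_of_notMem (by simp)]
  · simp

/-- **Lovász's decomposition lemma.** If `∑ rᵢ ≥ Δ(G) + 1 - k` then `V(G)` can be
partitioned into sets `V₁, …, V_k` with `Δ(G[Vᵢ]) ≤ rᵢ` for each `i`. -/
theorem lovasz_decomposition {V : Type*} [Fintype V] (G : SimpleGraph V)
    [DecidableRel G.Adj] (k : ℕ) (r : Fin k → ℕ)
    (hsum : G.maxDegree + 1 ≤ (∑ i, r i) + k) :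
    ∃ c : V → Fin k, ∀ i : Fin k,
      ∀ v : {v : V // c v = i},
        ((G.induce {v : V | c v = i}).neighborSet v).ncard ≤ r i := by
  classical
  have hk : 0 < k := by
    rcases Nat.eq_zero_or_pos k with h | h
    · subst h
      simp only [Finset.univ_eq_empty, Finset.sum_empty] at hsum
      omega
    · exact h
  set Φ : (V → Fin k) → ℤ := fun c =>
    ∑ u, (((univ.filter fun w => G.Adj u w ∧ c w = c u).card : ℤ) - 2 * r (c u)) with hΦ
  obtain ⟨c, -, hmin⟩ := Finset.exists_min_image (univ : Finset (V → Fin k)) Φ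
    ⟨fun _ => ⟨0, hk⟩, Finset.mem_univ _⟩
  have key : ∀ v : V, (univ.filter fun w => G.Adj v w ∧ c w = c v).card ≤ r (c v) := by
    intro v
    by_contra hvc
    push_neg at hvc
    -- existence of a good class j
    have hdsum : ∑ j, (univ.filter fun w => G.Adj v w ∧ c w = j).card = G.degree v := by
      rw [SimpleGraph.degree, neighborFinset_eq_filter,
        Finset.card_eq_sum_card_fiberwise (f := c) (t := univ) (fun x _ => Finset.mem_univ _)]
      refine Finset.sum_congr rfl fun j _ => ?_
      rw [Finset.filter_filter]
    have hex : ∃ j, (univ.filter fun w => G.Adj v w ∧ c w = j).card ≤ r j := by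
      by_contra h
      push_neg at h
      have h1 : ∑ j, (r j + 1) ≤ ∑ j, (univ.filter fun w => G.Adj v w ∧ c w = j).card :=
        Finset.sum_le_sum fun j _ => h j
      rw [Finset.sum_add_distrib, Finset.sum_const, Finset.card_univ, Fintype.card_fin,
        smul_eq_mul, mul_one, hdsum] at h1
      have h2 := G.degree_le_maxDegree v
      omega
    obtain ⟨j, hj⟩ := hex
    set c' := Function.update c v j with hc'def
    have hc'v : c' v = j := Function.update_self v j c
    have hc'ne : ∀ w, w ≠ v → c' w = c w := fun w hw => Function.update_of_ne hw j c
    -- A : sums over erase v of reversed-form filters equal the d-counts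
    have hA : ∀ x : Fin k, ((univ.erase v).filter fun u => G.Adj u v ∧ x = c u).card
        = (univ.filter fun w => G.Adj v w ∧ c w = x).card := by
      intro x
      congr 1
      ext u
      simp only [Finset.mem_filter, Finset.mem_erase, Finset.mem_univ, true_and]
      constructor
      · rintro ⟨-, hadj, hx⟩
        exact ⟨hadj.symm, hx.symm⟩
      · rintro ⟨hadj, hx⟩
        exact ⟨⟨(G.ne_of_adj hadj).symm, trivial⟩, hadj.symm, hx.symm⟩
    -- per-vertex difference for u ≠ v
    have hg : ∀ u ∈ univ.erase v,
        ((((univ.filter fun w => G.Adj u w ∧ c w = c u).card : ℤ) - 2 * r (c u))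
          - (((univ.filter fun w => G.Adj u w ∧ c' w = c' u).card : ℤ) - 2 * r (c' u)))
        = ((if G.Adj u v ∧ c v = c u then (1:ℤ) else 0)
            - (if G.Adj u v ∧ j = c u then (1:ℤ) else 0)) := by
      intro u hu
      have huv : u ≠ v := (Finset.mem_erase.mp hu).1
      have hcu : c' u = c u := hc'ne u huv
      rw [hcu]
      have h1 := card_filter_split v (fun w => G.Adj u w ∧ c w = c u)
      have h2 := card_filter_split v (fun w => G.Adj u w ∧ c' w = c u)
      have h3 : ((univ.erase v).filter fun w => G.Adj u w ∧ c' w = c u)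
          = ((univ.erase v).filter fun w => G.Adj u w ∧ c w = c u) := by
        apply Finset.filter_congr
        intro w hw
        rw [hc'ne w (Finset.mem_erase.mp hw).1]
      rw [h1, h2, h3, hc'v]
      push_cast
      split_ifs <;> ring
    -- the v-term difference
    have hfv : ((((univ.filter fun w => G.Adj v w ∧ c w = c v).card : ℤ) - 2 * r (c v))
          - (((univ.filter fun w => G.Adj v w ∧ c' w = c' v).card : ℤ) - 2 * r (c' v)))
        = (((univ.filter fun w => G.Adj v w ∧ c w = c v).card : ℤ) - 2 * r (c v))
          - (((univ.filter fun w => G.Adj v w ∧ c w = j).card : ℤ) - 2 * r j) := by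
      rw [hc'v]
      have h4 : (univ.filter fun w => G.Adj v w ∧ c' w = j)
          = univ.filter fun w => G.Adj v w ∧ c w = j := by
        apply Finset.filter_congr
        intro w _
        rcases eq_or_ne w v with rfl | hw
        · simp [G.irrefl]
        · rw [hc'ne w hw]
      rw [h4]
    -- total difference
    have hdiff : Φ c - Φ c'
        = ((((univ.filter fun w => G.Adj v w ∧ c w = c v).card : ℤ) - 2 * r (c v))
            - (((univ.filter fun w => G.Adj v w ∧ c w = j).card : ℤ) - 2 * r j))
          + (((univ.filter fun w => G.Adj v w ∧ c w = c v).card : ℤ)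
            - ((univ.filter fun w => G.Adj v w ∧ c w = j).card : ℤ)) := by
      rw [hΦ]
      rw [← Finset.sum_sub_distrib, ← Finset.add_sum_erase _ _ (Finset.mem_univ v)]
      rw [hfv, Finset.sum_congr rfl hg, Finset.sum_sub_distrib,
        Finset.sum_boole, Finset.sum_boole, hA (c v), hA j]
    have hvc' : (r (c v) : ℤ) < ((univ.filter fun w => G.Adj v w ∧ c w = c v).card : ℤ) := by
      exact_mod_cast hvc
    have hj' : ((univ.filter fun w => G.Adj v w ∧ c w = j).card : ℤ) ≤ (r j : ℤ) := by
      exact_mod_cast hj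
    have hmin' := hmin c' (Finset.mem_univ _)
    linarith
  refine ⟨c, fun i v => ?_⟩
  have hcv : c (v : V) = i := v.2
  have hkey := key (v : V)
  rw [hcv] at hkey
  have himg : Subtype.val '' ((G.induce {x : V | c x = i}).neighborSet v)
      = ↑(univ.filter fun w => G.Adj (v : V) w ∧ c w = i) := by
    ext u
    simp only [Set.mem_image, SimpleGraph.mem_neighborSet, comap_adj,
      Function.Embedding.coe_subtype, Finset.coe_filter, Finset.mem_univ, true_and,
      Set.mem_setOf_eq]
    constructor
    · rintro ⟨⟨x, hx⟩, hadj, rfl⟩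
      exact ⟨hadj, hx⟩
    · rintro ⟨hadj, hu⟩
      exact ⟨⟨u, hu⟩, hadj, rfl⟩
  calc ((G.induce {x : V | c x = i}).neighborSet v).ncard
      = (Subtype.val '' ((G.induce {x : V | c x = i}).neighborSet v)).ncard :=
        (Set.ncard_image_of_injective _ Subtype.val_injective).symm
    _ = (univ.filter fun w => G.Adj (v : V) w ∧ c w = i).card := by
        rw [himg, Set.ncard_coe_finset]
    _ ≤ r i := hkey
end

section
/- Every connected non-complete r-regular finite simple graph G (with r ≥ 2) contains, for every vertex x, a vertex y not adjacent to x and distinct from x such that G − y is connected. -/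
open SimpleGraph

lemma aux_adj_all_of_degree {V : Type*} [Fintype V] (G : SimpleGraph V)
    [DecidableRel G.Adj] (a b : V) (hab : a ≠ b)
    (hd : G.degree a = Fintype.card V - 1) : G.Adj a b := by
  classical
  have hsub : G.neighborFinset a ⊆ Finset.univ.erase a := by
    intro c hc
    rw [SimpleGraph.mem_neighborFinset] at hc
    exact Finset.mem_erase.2 ⟨(G.ne_of_adj hc).symm, Finset.mem_univ c⟩
  have hcard : (Finset.univ.erase a).card ≤ (G.neighborFinset a).card := by
    rw [Finset.card_erase_of_mem (Finset.mem_univ a), Finset.card_univ,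
      G.card_neighborFinset_eq_degree, hd]
  have heq := Finset.eq_of_subset_of_card_le hsub hcard
  have : b ∈ G.neighborFinset a := by
    rw [heq]
    exact Finset.mem_erase.2 ⟨hab.symm, Finset.mem_univ b⟩
  rwa [SimpleGraph.mem_neighborFinset] at this

/-- In a connected non-complete `r`-regular finite simple graph (`r ≥ 2`), for every
vertex `x` there is a vertex `y ≠ x` not adjacent to `x` whose deletion leaves the
graph connected. -/
theorem exists_nonadjacent_noncut {V : Type*} [Fintype V] (G : SimpleGraph V)
    (r : ℕ) (hr : 2 ≤ r) [DecidableRel G.Adj]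
    (hconn : G.Connected) (hnc : G ≠ ⊤) (hreg : G.IsRegularOfDegree r) (x : V) :
    ∃ y : V, y ≠ x ∧ ¬ G.Adj x y ∧ (G.induce {v : V | v ≠ y}).Connected := by
  classical
  -- there is a vertex z with z ≠ x and ¬ Adj x z
  obtain ⟨z, hzx, hznadj⟩ : ∃ z : V, z ≠ x ∧ ¬ G.Adj x z := by
    by_contra h
    push_neg at h
    apply hnc
    have hdx : G.degree x = Fintype.card V - 1 := by
      have hsub : G.neighborFinset x = Finset.univ.erase x := by
        apply Finset.Subset.antisymm
        · intro c hc
          rw [SimpleGraph.mem_neighborFinset] at hc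
          exact Finset.mem_erase.2 ⟨(G.ne_of_adj hc).symm, Finset.mem_univ c⟩
        · intro c hc
          rw [SimpleGraph.mem_neighborFinset]
          exact h c (Finset.mem_erase.1 hc).1
      rw [← G.card_neighborFinset_eq_degree, hsub,
        Finset.card_erase_of_mem (Finset.mem_univ x), Finset.card_univ]
    ext a b
    rw [SimpleGraph.top_adj]
    constructor
    · exact fun hab => G.ne_of_adj hab
    · intro hab
      exact aux_adj_all_of_degree G a b hab (by rw [hreg a, ← hreg x, hdx])
  -- pick y at maximal distance from x
  obtain ⟨y, -, hy⟩ := Finset.exists_max_image (Finset.univ : Finset V)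
    (fun v => G.dist x v) ⟨x, Finset.mem_univ x⟩
  have hdz : 2 ≤ G.dist x z := by
    have h0 : G.dist x z ≠ 0 := by
      intro h
      exact hzx (((SimpleGraph.Connected.dist_eq_zero_iff hconn).1 h).symm)
    have h1 : G.dist x z ≠ 1 := fun h => hznadj ((G.dist_eq_one_iff_adj).1 h)
    omega
  have hdy : 2 ≤ G.dist x y := le_trans hdz (hy z (Finset.mem_univ z))
  have hyx : y ≠ x := by
    intro h; subst h
    simp [SimpleGraph.dist_self] at hdy
  have hnadj : ¬ G.Adj x y := by
    intro h
    have := (G.dist_eq_one_iff_adj).2 h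
    omega
  refine ⟨y, hyx, hnadj, ?_⟩
  have hxmem : x ∈ {v : V | v ≠ y} := hyx.symm
  -- key: every vertex ≠ y is reachable from x in the induced graph
  have key : ∀ n : ℕ, ∀ v : V, ∀ hv : v ≠ y, G.dist x v = n →
      (G.induce {v : V | v ≠ y}).Reachable ⟨x, hxmem⟩ ⟨v, hv⟩ := by
    intro n
    induction n with
    | zero =>
      intro v hv hd
      have : x = v := (SimpleGraph.Connected.dist_eq_zero_iff hconn).1 hd
      subst this
      exact SimpleGraph.Reachable.refl _
    | succ n ih =>
      intro v hv hd
      have hvx : v ≠ x := by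
        intro h; subst h; rw [SimpleGraph.dist_self] at hd; omega
      obtain ⟨p, hp⟩ := SimpleGraph.Connected.exists_walk_length_eq_dist hconn v x
      obtain ⟨u, hadj, p', rfl⟩ := p.exists_eq_cons_of_ne hvx
      have hpl : p'.length = n := by
        rw [SimpleGraph.Walk.length_cons] at hp
        rw [SimpleGraph.dist_comm] at hd
        omega
      have hdu : G.dist x u = n := by
        have hle : G.dist x u ≤ n := by
          have := G.dist_le p'.reverse
          rwa [SimpleGraph.Walk.length_reverse, hpl] at this
        have hge : n ≤ G.dist x u := by
          have htri := SimpleGraph.Connected.dist_triangle hconn (u := x) (v := u) (w := v)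
          have : G.dist u v = 1 := (G.dist_eq_one_iff_adj).2 hadj.symm
          omega
        omega
      have huy : u ≠ y := by
        intro h; subst h
        have := hy v (Finset.mem_univ v)
        omega
      have hreach := ih u huy hdu
      refine hreach.trans (SimpleGraph.Adj.reachable ?_)
      show (G.induce {v : V | v ≠ y}).Adj ⟨u, huy⟩ ⟨v, hv⟩
      simp only [SimpleGraph.comap_adj, Function.Embedding.coe_subtype]
      exact hadj.symm
  rw [SimpleGraph.connected_iff]
  constructor
  · rintro ⟨a, ha⟩ ⟨b, hb⟩
    have h1 := key (G.dist x a) a ha rfl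
    have h2 := key (G.dist x b) b hb rfl
    exact h1.symm.trans h2
  · exact ⟨⟨x, hxmem⟩⟩
end

section
/- Let G be a finite simple graph, k ≥ 1, and r₁,…,r_k nonnegative integers with ∑ᵢ rᵢ ≥ Δ(G) + 1 − k. If P = (V₁,…,V_k) is a partition of V(G) minimizing f(P) = ∑ᵢ (|E(G[Vᵢ])| − rᵢ|Vᵢ|), then Δ(G[Vᵢ]) ≤ rᵢ for every i. -/
open SimpleGraph

private lemma edge_split' {V : Type*} (G : SimpleGraph V) {k : ℕ} (c : V → Fin k)
    (m : Fin k) (v : V) (hc : c v = m) :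
    {e : Sym2 V | e ∈ G.edgeSet ∧ ∀ x ∈ e, c x = m} =
      {e : Sym2 V | v ∉ e ∧ e ∈ G.edgeSet ∧ ∀ x ∈ e, c x = m} ∪
      (fun w => s(v, w)) '' {w : V | G.Adj v w ∧ c w = m} := by
  ext e
  constructor
  · rintro ⟨he, hall⟩
    by_cases hv : v ∈ e
    · right
      induction e using Sym2.ind with
      | _ x y =>
        rcases Sym2.mem_iff.mp hv with rfl | rfl
        · exact ⟨y, ⟨G.mem_edgeSet.mp he, hall y (Sym2.mem_mk_right _ _)⟩, rfl⟩
        · exact ⟨x, ⟨(G.mem_edgeSet.mp he).symm, hall x (Sym2.mem_mk_left _ _)⟩,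
            Sym2.eq_swap⟩
    · left; exact ⟨hv, he, hall⟩
  · rintro (⟨-, he, hall⟩ | ⟨w, ⟨hadj, hw⟩, rfl⟩)
    · exact ⟨he, hall⟩
    · refine ⟨G.mem_edgeSet.mpr hadj, fun x hx => ?_⟩
      rcases Sym2.mem_iff.mp hx with rfl | rfl
      · exact hc
      · exact hw

private lemma edge_novertex' {V : Type*} (G : SimpleGraph V) {k : ℕ} (c : V → Fin k)
    (m : Fin k) (v : V) (hc : c v ≠ m) :
    {e : Sym2 V | e ∈ G.edgeSet ∧ ∀ x ∈ e, c x = m} =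
      {e : Sym2 V | v ∉ e ∧ e ∈ G.edgeSet ∧ ∀ x ∈ e, c x = m} := by
  ext e
  constructor
  · rintro ⟨he, hall⟩
    exact ⟨fun hv => hc (hall v hv), he, hall⟩
  · rintro ⟨-, he, hall⟩
    exact ⟨he, hall⟩

private lemma edge_update' {V : Type*} [DecidableEq V] (G : SimpleGraph V) {k : ℕ}
    (c : V → Fin k) (m j : Fin k) (v : V) :
    {e : Sym2 V | v ∉ e ∧ e ∈ G.edgeSet ∧ ∀ x ∈ e, c x = m} =
      {e : Sym2 V | v ∉ e ∧ e ∈ G.edgeSet ∧ ∀ x ∈ e, Function.update c v j x = m} := by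
  ext e
  have key : ∀ (hv : v ∉ e) (x : V), x ∈ e → Function.update c v j x = c x := by
    intro hv x hx
    exact Function.update_of_ne (fun h => hv (by rw [← h]; exact hx)) _ _
  constructor
  · rintro ⟨hv, he, hall⟩
    exact ⟨hv, he, fun x hx => (key hv x hx).trans (hall x hx)⟩
  · rintro ⟨hv, he, hall⟩
    exact ⟨hv, he, fun x hx => (key hv x hx).symm.trans (hall x hx)⟩

/-- If `∑ rᵢ ≥ Δ(G) + 1 - k` and the partition `c` of `V(G)` into `k` parts minimizes
`f(P) = ∑ᵢ (|E(G[Vᵢ])| - rᵢ|Vᵢ|)`, then `Δ(G[Vᵢ]) ≤ rᵢ` for every `i`. -/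
theorem min_partition_max_degree {V : Type*} [Fintype V] (G : SimpleGraph V)
    [DecidableRel G.Adj] (k : ℕ) (hk : 1 ≤ k) (r : Fin k → ℕ)
    (hsum : G.maxDegree + 1 ≤ (∑ i, r i) + k)
    (f : (V → Fin k) → ℤ)
    (hf : ∀ c : V → Fin k, f c = ∑ i : Fin k,
      (({e : Sym2 V | e ∈ G.edgeSet ∧ ∀ v ∈ e, c v = i}.ncard : ℤ) -
        (r i : ℤ) * ({v : V | c v = i}.ncard : ℤ)))
    (c : V → Fin k) (hmin : ∀ c' : V → Fin k, f c ≤ f c') :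
    ∀ i : Fin k, ∀ v : {v : V // c v = i},
      ((G.induce {v : V | c v = i}).neighborSet v).ncard ≤ r i := by
  classical
  rintro i ⟨v, hv⟩
  by_contra hcon
  push_neg at hcon
  set W : Fin k → Set V := fun m => {w : V | G.Adj v w ∧ c w = m} with hW
  set d : Fin k → ℕ := fun m => (W m).ncard with hd
  -- the induced degree is `d i`
  have hval : Subtype.val '' ((G.induce {x : V | c x = i}).neighborSet ⟨v, hv⟩) = W i := by
    ext w
    constructor
    · rintro ⟨⟨w, hwm⟩, hadj, rfl⟩
      exact ⟨hadj, hwm⟩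
    · rintro ⟨hadj, hwm⟩
      exact ⟨⟨w, hwm⟩, hadj, rfl⟩
  have hdi : r i < d i := by
    have h2 := Set.ncard_image_of_injective
      ((G.induce {x : V | c x = i}).neighborSet ⟨v, hv⟩) (Subtype.val_injective)
    rw [hval] at h2
    have h3 : d i = ((G.induce {x : V | c x = i}).neighborSet ⟨v, hv⟩).ncard := h2
    omega
  -- sum of the `d m` is the degree of `v`
  have hWcard : ∀ m, d m = ((G.neighborFinset v).filter (fun w => c w = m)).card := by
    intro m
    have hseteq : W m = ↑((G.neighborFinset v).filter (fun w => c w = m)) := by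
      ext w
      simp [hW, SimpleGraph.mem_neighborFinset]
    simp only [hd, hseteq, Set.ncard_coe_finset]
  have hsumd : ∑ m, d m = G.degree v := by
    simp_rw [hWcard]
    rw [← Finset.card_eq_sum_card_fiberwise (fun x _ => Finset.mem_univ (c x))]
    exact G.card_neighborFinset_eq_degree v
  -- there is a color `j` with few neighbors of `v`
  have hex : ∃ j, d j ≤ r j := by
    by_contra hno
    push_neg at hno
    have h1 : ∑ m, (r m + 1) ≤ ∑ m, d m := Finset.sum_le_sum (fun m _ => hno m)
    rw [Finset.sum_add_distrib, Finset.sum_const, Finset.card_univ, Fintype.card_fin,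
      smul_eq_mul, mul_one, hsumd] at h1
    have h2 : G.degree v ≤ G.maxDegree := G.degree_le_maxDegree v
    omega
  obtain ⟨j, hdj⟩ := hex
  have hji : j ≠ i := fun h => by rw [h] at hdj; omega
  -- the recoloring
  set c' : V → Fin k := Function.update c v j with hc'
  have hc'v : c' v = j := Function.update_self _ _ _
  have hc'ne : ∀ x, x ≠ v → c' x = c x := fun x hx => Function.update_of_ne hx _ _
  -- injectivity of w ↦ s(v,w)
  have hinj : Function.Injective (fun w : V => s(v, w)) := fun a b h =>
    Sym2.congr_right.mp h
  -- abbreviations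
  have hdisj : ∀ (a : V → Fin k) (m : Fin k),
      Disjoint {e : Sym2 V | v ∉ e ∧ e ∈ G.edgeSet ∧ ∀ x ∈ e, a x = m}
        ((fun w => s(v, w)) '' {w : V | G.Adj v w ∧ a w = m}) := by
    intro a m
    rw [Set.disjoint_left]
    rintro e ⟨hve, -⟩ ⟨w, -, rfl⟩
    exact hve (Sym2.mem_mk_left _ _)
  -- edge set counts
  have hEi : {e : Sym2 V | e ∈ G.edgeSet ∧ ∀ x ∈ e, c x = i}.ncard =
      {e : Sym2 V | e ∈ G.edgeSet ∧ ∀ x ∈ e, c' x = i}.ncard + d i := by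
    rw [edge_split' G c i v hv, Set.ncard_union_eq (hdisj c i) (Set.toFinite _)
      (Set.toFinite _), Set.ncard_image_of_injective _ hinj,
      edge_novertex' G c' i v (by rw [hc'v]; exact hji),
      ← edge_update' G c i j v]
  have hWj' : {w : V | G.Adj v w ∧ c' w = j} = W j := by
    ext w
    have : w ∈ {w : V | G.Adj v w ∧ c' w = j} ↔ G.Adj v w ∧ c' w = j := Iff.rfl
    constructor
    · rintro ⟨hadj, hcw⟩
      exact ⟨hadj, by rw [← hc'ne w (G.ne_of_adj hadj).symm]; exact hcw⟩
    · rintro ⟨hadj, hcw⟩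
      exact ⟨hadj, by rw [hc'ne w (G.ne_of_adj hadj).symm]; exact hcw⟩
  have hEj : {e : Sym2 V | e ∈ G.edgeSet ∧ ∀ x ∈ e, c' x = j}.ncard =
      {e : Sym2 V | e ∈ G.edgeSet ∧ ∀ x ∈ e, c x = j}.ncard + d j := by
    rw [edge_split' G c' j v hc'v, Set.ncard_union_eq (hdisj c' j) (Set.toFinite _)
      (Set.toFinite _), Set.ncard_image_of_injective _ hinj, hWj',
      edge_novertex' G c j v (by rw [hv]; exact fun h => hji h.symm),
      edge_update' G c j j v]
  have hEm : ∀ m, m ≠ i → m ≠ j →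
      {e : Sym2 V | e ∈ G.edgeSet ∧ ∀ x ∈ e, c' x = m} =
      {e : Sym2 V | e ∈ G.edgeSet ∧ ∀ x ∈ e, c x = m} := by
    intro m hmi hmj
    rw [edge_novertex' G c m v (by rw [hv]; exact fun h => hmi h.symm),
      edge_novertex' G c' m v (by rw [hc'v]; exact fun h => hmj h.symm),
      edge_update' G c m j v]
  -- vertex set counts
  have hVi : {x : V | c x = i}.ncard = {x : V | c' x = i}.ncard + 1 := by
    have hset : {x : V | c' x = i} = {x : V | c x = i} \ {v} := by
      ext x
      by_cases hx : x = v
      · subst hx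
        simp [hc'v, hji, hv]
      · simp [hc'ne x hx, hx]
    rw [hset]
    exact (Set.ncard_diff_singleton_add_one (show v ∈ {x : V | c x = i} from hv)).symm
  have hVj : {x : V | c' x = j}.ncard = {x : V | c x = j}.ncard + 1 := by
    have hset : {x : V | c' x = j} = insert v {x : V | c x = j} := by
      ext x
      by_cases hx : x = v
      · subst hx
        simp [hc'v]
      · simp [hc'ne x hx, hx]
    rw [hset, Set.ncard_insert_of_notMem (by simp [hv]; exact fun h => hji h.symm)]
  have hVm : ∀ m, m ≠ i → m ≠ j → {x : V | c' x = m} = {x : V | c x = m} := by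
    intro m hmi hmj
    ext x
    by_cases hx : x = v
    · subst hx
      simp only [Set.mem_setOf_eq, hc'v, hv]
      exact iff_of_false (fun h => hmj h.symm) (fun h => hmi h.symm)
    · simp only [Set.mem_setOf_eq, hc'ne x hx]
  -- assemble
  have hkey : f c' = f c + ((d j : ℤ) - r j) - ((d i : ℤ) - r i) := by
    rw [hf c, hf c']
    have hdiff : ∀ m : Fin k, m ∈ Finset.univ → m ∉ ({i, j} : Finset (Fin k)) →
        (({e : Sym2 V | e ∈ G.edgeSet ∧ ∀ x ∈ e, c' x = m}.ncard : ℤ) -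
          (r m : ℤ) * ({x : V | c' x = m}.ncard : ℤ)) -
        (({e : Sym2 V | e ∈ G.edgeSet ∧ ∀ x ∈ e, c x = m}.ncard : ℤ) -
          (r m : ℤ) * ({x : V | c x = m}.ncard : ℤ)) = 0 := by
      intro m _ hm
      simp only [Finset.mem_insert, Finset.mem_singleton] at hm
      push_neg at hm
      rw [hEm m hm.1 hm.2, hVm m hm.1 hm.2]
      ring
    have hsplit : ∑ m : Fin k,
        ((({e : Sym2 V | e ∈ G.edgeSet ∧ ∀ x ∈ e, c' x = m}.ncard : ℤ) -
          (r m : ℤ) * ({x : V | c' x = m}.ncard : ℤ)) -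
        (({e : Sym2 V | e ∈ G.edgeSet ∧ ∀ x ∈ e, c x = m}.ncard : ℤ) -
          (r m : ℤ) * ({x : V | c x = m}.ncard : ℤ))) =
        ((d j : ℤ) - r j) - ((d i : ℤ) - r i) := by
      rw [← Finset.sum_subset (Finset.subset_univ ({i, j} : Finset (Fin k)))
        (fun m hm hnm => hdiff m hm hnm)]
      rw [Finset.sum_pair (fun h => hji h.symm)]
      have e1 : ({e : Sym2 V | e ∈ G.edgeSet ∧ ∀ x ∈ e, c x = i}.ncard : ℤ) =
          ({e : Sym2 V | e ∈ G.edgeSet ∧ ∀ x ∈ e, c' x = i}.ncard : ℤ) + d i := by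
        exact_mod_cast congrArg (Nat.cast : ℕ → ℤ) hEi
      have e2 : ({e : Sym2 V | e ∈ G.edgeSet ∧ ∀ x ∈ e, c' x = j}.ncard : ℤ) =
          ({e : Sym2 V | e ∈ G.edgeSet ∧ ∀ x ∈ e, c x = j}.ncard : ℤ) + d j := by
        exact_mod_cast congrArg (Nat.cast : ℕ → ℤ) hEj
      have e3 : ({x : V | c x = i}.ncard : ℤ) = ({x : V | c' x = i}.ncard : ℤ) + 1 := by
        exact_mod_cast congrArg (Nat.cast : ℕ → ℤ) hVi
      have e4 : ({x : V | c' x = j}.ncard : ℤ) = ({x : V | c x = j}.ncard : ℤ) + 1 := by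
        exact_mod_cast congrArg (Nat.cast : ℕ → ℤ) hVj
      rw [e1, e2, e3, e4]
      ring
    rw [Finset.sum_sub_distrib] at hsplit
    linarith [hsplit]
  have hlt : f c' < f c := by
    rw [hkey]
    have h1 : (d j : ℤ) ≤ r j := by exact_mod_cast hdj
    have h2 : (r i : ℤ) + 1 ≤ d i := by exact_mod_cast hdi
    linarith
  exact absurd (hmin c') (not_le.mpr hlt)
end
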